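/- Fix ε > 0, 0 < δ₁ ≤ 1/2, and 0 < δ₂ ≤ 1. Suppose μ is a probability measure on S^{n−1} satisfying the ACW(θ, α) condition, x ∈ ℝⁿ is nonzero, and x₀ satisfies ‖x₀ − x‖₂ ≤ √δ₁·sin(θ)·‖x‖₂. Let X_k denote the k-th iterate of the generalized randomized Kaczmarz method with respect to μ started from x₀. Then with probability at least 1 − δ₁ − δ₂: if k ≥ (log(2/ε) + log(1/δ₂))·n/α, then ‖X_k − x‖₂² ≤ ε‖x₀ − x‖₂². -/

import Mathlib

open MeasureTheory ProbabilityTheory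
open scoped RealInnerProductSpace ENNReal BigOperators

noncomputable section

/-- `ℝⁿ` with the Euclidean structure. -/
abbrev Euc (n : ℕ) := EuclideanSpace ℝ (Fin n)

/-- The sign function used in the paper: `sgn t = 1` if `t ≥ 0` and `-1` otherwise. -/
def sgn (t : ℝ) : ℝ := if 0 ≤ t then 1 else -1

/-- One (generalized) Kaczmarz step for phase retrieval with signal `x`,
measurement vector `a`, applied to the current iterate `z`:
`Pz = z + (sign(⟨a,z⟩)·|⟨a,x⟩| − ⟨a,z⟩) a`. -/
def kacStep {n : ℕ} (x a z : Euc n) : Euc n :=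
  z + (sgn ⟪a, z⟫ * |⟪a, x⟫| - ⟪a, z⟫) • a

/-- The randomized Kaczmarz iterates `X_k = P_k ⋯ P_1 x₀`, where step `k+1`
uses the measurement vector `a k`. -/
def kacIter {n : ℕ} (x : Euc n) (a : ℕ → Euc n) (x0 : Euc n) : ℕ → Euc n
  | 0 => x0
  | k + 1 => kacStep x (a k) (kacIter x a x0 k)

/-- The spherical wedge `W_{x,z}`: points of the unit sphere where the signs of
`⟨v,x⟩` and `⟨v,z⟩` disagree. -/
def wedge {n : ℕ} (x z : Euc n) : Set (Euc n) :=
  {v | v ∈ Metric.sphere (0 : Euc n) 1 ∧ sgn ⟪v, x⟫ ≠ sgn ⟪v, z⟫}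

/-- The matrix `E_{a∼μ}[a aᵀ]`. -/
def covMat {n : ℕ} (μ : Measure (Euc n)) : Matrix (Fin n) (Fin n) ℝ :=
  Matrix.of fun i j => ∫ a, a i * a j ∂μ

/-- The matrix `E_{a∼μ}[a aᵀ 1_W(a)]`. -/
def covMatOn {n : ℕ} (μ : Measure (Euc n)) (W : Set (Euc n)) : Matrix (Fin n) (Fin n) ℝ :=
  Matrix.of fun i j => ∫ a in W, a i * a j ∂μ

/-- The quadratic form `vᵀ M v` of a matrix. -/
def quadForm {n : ℕ} (M : Matrix (Fin n) (Fin n) ℝ) (v : Euc n) : ℝ :=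
  ∑ i, ∑ j, v i * M i j * v j

/-- The smallest eigenvalue of a symmetric matrix, via the Rayleigh quotient
characterization `λ_min(M) = inf_{‖v‖=1} vᵀMv`. -/
def lamMin {n : ℕ} (M : Matrix (Fin n) (Fin n) ℝ) : ℝ :=
  ⨅ v : {v : Euc n // ‖v‖ = 1}, quadForm M (v : Euc n)

/-- The largest eigenvalue of a symmetric matrix, via the Rayleigh quotient
characterization `λ_max(M) = sup_{‖v‖=1} vᵀMv`. -/
def lamMax {n : ℕ} (M : Matrix (Fin n) (Fin n) ℝ) : ℝ :=
  ⨆ v : {v : Euc n // ‖v‖ = 1}, quadForm M (v : Euc n)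

/-- The uniform probability measure on the unit sphere `S^{n-1} ⊂ ℝⁿ`:
the normalized `(n-1)`-dimensional Hausdorff measure on the sphere. -/
def sphereUniform (n : ℕ) : Measure (Euc n) :=
  (μH[(n : ℝ) - 1] (Metric.sphere (0 : Euc n) 1))⁻¹ •
    (μH[(n : ℝ) - 1]).restrict (Metric.sphere (0 : Euc n) 1)

/-- The `ACW(θ, α)` (anti-concentration on wedges) condition: for every wedge `W`
of angle less than `θ`, `λ_min(E[aaᵀ] − 4 E[aaᵀ 1_W(a)]) ≥ α/n`. -/
def ACW {n : ℕ} (μ : Measure (Euc n)) (θ α : ℝ) : Prop :=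
  ∀ x z : Euc n, x ≠ 0 → z ≠ 0 → InnerProductGeometry.angle x z < θ →
    lamMin (covMat μ - (4 : ℝ) • covMatOn μ (wedge x z)) ≥ α / n

/-- The hitting time `τ = min{k : X_k ∉ B}` (equal to `⊤ = ∞` if the trajectory
never leaves `B`). -/
def hitTime {n : ℕ} (B : Set (Euc n)) (X : ℕ → Euc n) : ℕ∞ :=
  ⨅ j ∈ {j : ℕ | X j ∉ B}, (j : ℕ∞)

/-- The stopped iterate `X_{τ ∧ k}` where `τ = hitTime B`. -/
def stoppedIter {n : ℕ} (x : Euc n) (a : ℕ → Euc n) (x0 : Euc n) (B : Set (Euc n)) (k : ℕ) :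
    Euc n :=
  kacIter x a x0 (min (hitTime B (kacIter x a x0)) (k : ℕ∞)).toNat

/-- The filtration `(F_k)` where `F_k = σ(a_0, …, a_{k-1})` is generated by the
first `k` measurement vectors. -/
def measFiltration {Ω : Type*} {mΩ : MeasurableSpace Ω} {n : ℕ}
    (A : ℕ → Ω → Euc n) (hA : ∀ i, Measurable (A i)) : Filtration ℕ mΩ where
  seq k := ⨆ j ∈ Set.Iio k, MeasurableSpace.comap (A j) inferInstance
  mono' _ _ hij := biSup_mono fun _ ha => lt_of_lt_of_le ha hij
  le' _ := iSup₂_le fun j _ => measurable_iff_comap_le.mp (hA j)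

/-- The set `S_τ` of `{0,1}`-vectors of length `m` with at most `τ·m` ones. -/
def selVecs (m : ℕ) (τ : ℝ) : Set (Fin m → ℝ) :=
  {s | (∀ i, s i = 0 ∨ s i = 1) ∧ ∑ i, s i ≤ τ * m}

/-- The Euclidean unit ball `B₂ⁿ ⊂ ℝⁿ`. -/
def unitBall (n : ℕ) : Set (Euc n) :=
  {v | ‖v‖ ≤ 1}

/-- A process `(Y_t)_{t ∈ T}` has *mixed tail increments* with respect to a pair of
metrics `(d₁, d₂)`: there are constants `c, C > 0` with
`P(|Y_s − Y_t| ≥ c(√u d₂(s,t) + u d₁(s,t))) ≤ C e^{−u}` for all `s,t,u`. -/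
def HasMixedTailIncrements {Ω T : Type*} [MeasurableSpace Ω] (P : Measure Ω)
    (Y : T → Ω → ℝ) (d₁ d₂ : T → T → ℝ) : Prop :=
  ∃ c C : ℝ, 0 < c ∧ 0 < C ∧ ∀ s t : T, ∀ u : ℝ, 0 < u →
    P {ω | c * (Real.sqrt u * d₂ s t + u * d₁ s t) ≤ |Y s ω - Y t ω|} ≤
      ENNReal.ofReal (C * Real.exp (-u))

/-- An admissible sequence of subsets: `|T₀| = 1` and `|T_k| ≤ 2^(2^k)` for `k ≥ 1`
(the sets are taken nonempty so that distances to them are meaningful). -/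
def Admissible {T : Type*} (Ts : ℕ → Finset T) : Prop :=
  (Ts 0).card = 1 ∧ (∀ k, 1 ≤ k → (Ts k).card ≤ 2 ^ 2 ^ k) ∧ ∀ k, (Ts k).Nonempty

/-- The distance from a point to a finite set, for an abstract metric `d`. -/
def distToFinset {T : Type*} (d : T → T → ℝ) (t : T) (S : Finset T) : ℝ :=
  sInf ((fun u => d t u) '' (S : Set T))

/-- Talagrand's `γ_α` functional of a metric space `(T, d)` (here `T` is a type and
`d` an abstract metric on it): `γ_α(T,d) = inf_{(T_k)} sup_t Σ_k 2^{k/α} d(t, T_k)`,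
the infimum being over admissible sequences. -/
def gammaFunctional {T : Type*} (α : ℝ) (d : T → T → ℝ) : ℝ :=
  ⨅ Ts : {Ts : ℕ → Finset T // Admissible Ts},
    ⨆ t : T, ∑' k : ℕ, (2 : ℝ) ^ ((k : ℝ) / α) * distToFinset d t ((Ts : ℕ → Finset T) k)

end

noncomputable section AuxProof

lemma sgn_mul_abs (t : ℝ) : sgn t * |t| = t := by
  unfold sgn; split <;> rename_i h
  · rw [abs_of_nonneg h]; ring
  · rw [abs_of_neg (lt_of_not_ge h)]; ring

lemma sgn_ne_cases {s t : ℝ} (h : sgn s ≠ sgn t) : s * t ≤ 0 ∧ sgn t * |s| = -s := by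
  unfold sgn at *
  by_cases hs : 0 ≤ s <;> by_cases ht : 0 ≤ t
  · simp [hs, ht] at h
  · rw [if_neg ht, abs_of_nonneg hs]
    exact ⟨mul_nonpos_of_nonneg_of_nonpos hs (le_of_not_ge ht), by ring⟩
  · rw [if_pos ht, abs_of_neg (lt_of_not_ge hs)]
    exact ⟨mul_nonpos_of_nonpos_of_nonneg (le_of_not_ge hs) ht, by ring⟩
  · simp [hs, ht] at h

lemma kacStep_sub_sq {n : ℕ} (x a z : Euc n) (ha : ‖a‖ = 1) :
    ‖kacStep x a z - x‖ ^ 2 = ‖z - x‖ ^ 2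
      + 2 * (sgn ⟪a, z⟫ * |⟪a, x⟫| - ⟪a, z⟫) * (⟪a, z⟫ - ⟪a, x⟫)
      + (sgn ⟪a, z⟫ * |⟪a, x⟫| - ⟪a, z⟫) ^ 2 := by
  set c : ℝ := sgn ⟪a, z⟫ * |⟪a, x⟫| - ⟪a, z⟫ with hc
  have h1 : kacStep x a z - x = (z - x) + c • a := by
    simp only [kacStep]; abel
  rw [h1, norm_add_sq_real, real_inner_smul_right, norm_smul]
  have h2 : ⟪z - x, a⟫ = ⟪a, z⟫ - ⟪a, x⟫ := by
    rw [real_inner_comm, inner_sub_right]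
  rw [h2, ha]
  simp [mul_pow]
  ring

lemma kacStep_le {n : ℕ} (x a z : Euc n) (ha : ‖a‖ = 1) :
    ‖kacStep x a z - x‖ ^ 2 ≤ ‖z - x‖ ^ 2 - ⟪a, z - x⟫ ^ 2
      + (if sgn ⟪a, x⟫ ≠ sgn ⟪a, z⟫ then 4 * ⟪a, z - x⟫ ^ 2 else 0) := by
  have hw : ⟪a, z - x⟫ = ⟪a, z⟫ - ⟪a, x⟫ := inner_sub_right a z x
  rw [kacStep_sub_sq x a z ha, hw]
  by_cases h : sgn ⟪a, x⟫ ≠ sgn ⟪a, z⟫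
  · obtain ⟨hst, habs⟩ := sgn_ne_cases h
    rw [if_pos h, habs]
    nlinarith [hst]
  · rw [if_neg h]
    push_neg at h
    rw [← h, sgn_mul_abs]
    ring_nf
    nlinarith [sq_nonneg (⟪a, z⟫ - ⟪a, x⟫)]

lemma region_lemma {n : ℕ} (x z : Euc n) (θ : ℝ) (hθ : 0 < θ) (hθ' : θ < Real.pi / 2)
    (hx : x ≠ 0) (hz : ‖z - x‖ < Real.sin θ * ‖x‖) :
    z ≠ 0 ∧ InnerProductGeometry.angle x z < θ := by
  have hπ := Real.pi_pos
  have hcos : 0 < Real.cos θ := Real.cos_pos_of_mem_Ioo ⟨by linarith, hθ'⟩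
  have hsin : Real.sin θ < 1 := by
    calc Real.sin θ < Real.sin (Real.pi / 2) :=
          Real.sin_lt_sin_of_lt_of_le_pi_div_two (by linarith) le_rfl hθ'
      _ = 1 := Real.sin_pi_div_two
  have hsinpos : 0 < Real.sin θ := Real.sin_pos_of_pos_of_lt_pi hθ (by linarith)
  have hxn : 0 < ‖x‖ := norm_pos_iff.mpr hx
  have hzne : z ≠ 0 := by
    intro h
    rw [h, zero_sub, norm_neg] at hz
    nlinarith
  have hzn : 0 < ‖z‖ := norm_pos_iff.mpr hzne
  refine ⟨hzne, ?_⟩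
  have hz2 : ‖z - x‖ ^ 2 < (Real.sin θ * ‖x‖) ^ 2 :=
    pow_lt_pow_left₀ hz (norm_nonneg _) (by norm_num)
  have hexp : ‖z - x‖ ^ 2 = ‖z‖ ^ 2 - 2 * ⟪x, z⟫ + ‖x‖ ^ 2 := by
    rw [norm_sub_sq_real, real_inner_comm z x]
  have hsin2 : Real.sin θ ^ 2 = 1 - Real.cos θ ^ 2 := Real.sin_sq θ
  have hkey : Real.cos θ * (‖x‖ * ‖z‖) < ⟪x, z⟫ := by
    nlinarith [sq_nonneg (‖z‖ - Real.cos θ * ‖x‖)]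
  have ht1 : Real.cos θ < ⟪x, z⟫ / (‖x‖ * ‖z‖) := by
    rw [lt_div_iff₀ (by positivity)]; linarith
  have ht2 : ⟪x, z⟫ / (‖x‖ * ‖z‖) ≤ 1 := by
    have := abs_real_inner_div_norm_mul_norm_le_one x z
    exact le_of_abs_le this
  rw [InnerProductGeometry.angle]
  calc Real.arccos (⟪x, z⟫ / (‖x‖ * ‖z‖)) < Real.arccos (Real.cos θ) :=
        Real.strictAntiOn_arccos ⟨Real.neg_one_le_cos θ, Real.cos_le_one θ⟩
          ⟨by linarith [Real.neg_one_le_cos θ], ht2⟩ ht1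
    _ = θ := Real.arccos_cos hθ.le (by linarith)

lemma quadForm_smul {n : ℕ} (M : Matrix (Fin n) (Fin n) ℝ) (c : ℝ) (v : Euc n) :
    quadForm (c • M) v = c * quadForm M v := by
  unfold quadForm
  rw [Finset.mul_sum]
  refine Finset.sum_congr rfl fun i _ => ?_
  rw [Finset.mul_sum]
  refine Finset.sum_congr rfl fun j _ => ?_
  simp [Matrix.smul_apply]; ring

lemma quadForm_sub {n : ℕ} (M N : Matrix (Fin n) (Fin n) ℝ) (v : Euc n) :
    quadForm (M - N) v = quadForm M v - quadForm N v := by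
  unfold quadForm
  rw [← Finset.sum_sub_distrib]
  refine Finset.sum_congr rfl fun i _ => ?_
  rw [← Finset.sum_sub_distrib]
  refine Finset.sum_congr rfl fun j _ => ?_
  simp [Matrix.sub_apply]; ring

lemma quadForm_smul_vec {n : ℕ} (M : Matrix (Fin n) (Fin n) ℝ) (c : ℝ) (v : Euc n) :
    quadForm M (c • v) = c ^ 2 * quadForm M v := by
  unfold quadForm
  rw [Finset.mul_sum]
  refine Finset.sum_congr rfl fun i _ => ?_
  rw [Finset.mul_sum]
  refine Finset.sum_congr rfl fun j _ => ?_
  simp [PiLp.smul_apply, smul_eq_mul]; ring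

lemma quadForm_zero_vec {n : ℕ} (M : Matrix (Fin n) (Fin n) ℝ) :
    quadForm M (0 : Euc n) = 0 := by
  unfold quadForm
  simp

lemma lamMin_le_quadForm {n : ℕ} (M : Matrix (Fin n) (Fin n) ℝ) (β : ℝ) (hβ : 0 < β)
    (h : lamMin M ≥ β) (v : Euc n) (hv : ‖v‖ = 1) : β ≤ quadForm M v := by
  by_cases hb : BddBelow (Set.range fun u : {u : Euc n // ‖u‖ = 1} => quadForm M (u : Euc n))
  · exact le_trans h (ciInf_le hb ⟨v, hv⟩)
  · exfalso
    rw [lamMin, Real.iInf_of_not_bddBelow hb] at h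
    linarith

lemma quadForm_ge_norm {n : ℕ} (M : Matrix (Fin n) (Fin n) ℝ) (β : ℝ) (hβ : 0 < β)
    (h : lamMin M ≥ β) (w : Euc n) : β * ‖w‖ ^ 2 ≤ quadForm M w := by
  rcases eq_or_ne w 0 with rfl | hw
  · simp [quadForm_zero_vec]
  · have hwn : 0 < ‖w‖ := norm_pos_iff.mpr hw
    set v : Euc n := ‖w‖⁻¹ • w with hv
    have hvn : ‖v‖ = 1 := by
      rw [hv, norm_smul]; simp [abs_of_nonneg (inv_nonneg.mpr hwn.le)]
      field_simp
    have hwv : w = ‖w‖ • v := by rw [hv, smul_inv_smul₀ hwn.ne']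
    have h2 : quadForm M w = ‖w‖ ^ 2 * quadForm M v := by
      conv_lhs => rw [hwv]
      rw [quadForm_smul_vec]
    have h3 := lamMin_le_quadForm M β hβ h v hvn
    rw [h2]
    nlinarith

lemma abs_apply_le_norm {n : ℕ} (a : Euc n) (i : Fin n) : |a i| ≤ ‖a‖ := by
  rw [EuclideanSpace.norm_eq]
  rw [← Real.sqrt_sq_eq_abs]
  apply Real.sqrt_le_sqrt
  have : |a i| ^ 2 ≤ ∑ j, ‖a j‖ ^ 2 := by
    have := Finset.single_le_sum (f := fun j => ‖a j‖ ^ 2)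
      (fun j _ => by positivity) (Finset.mem_univ i)
    simpa [sq_abs] using this
  simpa [sq_abs] using this

lemma inner_eq_sum {n : ℕ} (a w : Euc n) : ⟪a, w⟫ = ∑ i, a i * w i := by
  simp [PiLp.inner_apply, RCLike.inner_apply, conj_trivial]
  exact Finset.sum_congr rfl fun i _ => mul_comm _ _

lemma measurable_apply' {n : ℕ} (i : Fin n) : Measurable fun a : Euc n => a i :=
  (continuous_apply i).comp (PiLp.continuous_ofLp 2 _) |>.measurable

lemma integral_inner_sq {n : ℕ} (ν : Measure (Euc n)) [IsFiniteMeasure ν]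
    (hb : ∀ᵐ a ∂ν, ‖a‖ = 1) (w : Euc n) :
    ∫ a, ⟪a, w⟫ ^ 2 ∂ν = ∑ i, ∑ j, w i * (∫ a, a i * a j ∂ν) * w j := by
  have hint : ∀ i j : Fin n, Integrable (fun a : Euc n => a i * a j) ν := by
    intro i j
    refine Integrable.mono' (integrable_const 1)
      (((measurable_apply' i).mul (measurable_apply' j)).aestronglyMeasurable) ?_
    filter_upwards [hb] with a ha
    rw [Real.norm_eq_abs, abs_mul]
    calc |a i| * |a j| ≤ ‖a‖ * ‖a‖ :=
          mul_le_mul (abs_apply_le_norm a i) (abs_apply_le_norm a j) (abs_nonneg _)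
            (norm_nonneg _)
      _ = 1 := by rw [ha]; ring
  have h1 : (fun a : Euc n => ⟪a, w⟫ ^ 2)
      = fun a => ∑ i, ∑ j, (w i * w j) * (a i * a j) := by
    funext a
    rw [inner_eq_sum, sq, Finset.sum_mul_sum]
    refine Finset.sum_congr rfl fun i _ => Finset.sum_congr rfl fun j _ => by ring
  rw [h1]
  rw [integral_finset_sum _ (fun i _ => integrable_finset_sum _
    (fun j _ => (hint i j).const_mul _))]
  refine Finset.sum_congr rfl fun i _ => ?_
  rw [integral_finset_sum _ (fun j _ => (hint i j).const_mul _)]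
  refine Finset.sum_congr rfl fun j _ => ?_
  rw [integral_const_mul]
  ring

lemma measurable_sgn : Measurable sgn := by
  unfold sgn
  exact Measurable.ite (measurableSet_le measurable_const measurable_id)
    measurable_const measurable_const

lemma measurable_inner_right {n : ℕ} (y : Euc n) :
    Measurable fun a : Euc n => ⟪a, y⟫ :=
  (continuous_id.inner continuous_const).measurable

lemma measurable_kacStep_a {n : ℕ} (x z : Euc n) :
    Measurable fun a : Euc n => kacStep x a z := by
  unfold kacStep
  apply measurable_const.add
  exact Measurable.smul
    (((measurable_sgn.comp (measurable_inner_right z)).mul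
      ((measurable_inner_right x).abs)).sub (measurable_inner_right z))
    measurable_id

lemma measurableSet_wedge {n : ℕ} (x z : Euc n) : MeasurableSet (wedge x z) := by
  have h1 : MeasurableSet {v : Euc n | v ∈ Metric.sphere (0 : Euc n) 1} :=
    Metric.isClosed_sphere.measurableSet
  have h2 : MeasurableSet {v : Euc n | sgn ⟪v, x⟫ = sgn ⟪v, z⟫} :=
    measurableSet_eq_fun (measurable_sgn.comp (measurable_inner_right x))
      (measurable_sgn.comp (measurable_inner_right z))
  exact h1.inter h2.compl

lemma kacStep_self {n : ℕ} (x a : Euc n) : kacStep x a x = x := by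
  simp only [kacStep, sgn_mul_abs, sub_self, zero_smul, add_zero]

lemma wedge_self {n : ℕ} (x : Euc n) : wedge x x = ∅ := by
  ext v; simp [wedge]

lemma covMatOn_empty {n : ℕ} (μ : Measure (Euc n)) : covMatOn μ (∅ : Set (Euc n)) = 0 := by
  unfold covMatOn
  ext i j
  simp

/-- The main one-step contraction estimate. -/
lemma step_contraction {n : ℕ} (μ : Measure (Euc n)) [IsProbabilityMeasure μ]
    (hsupp : ∀ᵐ a ∂μ, a ∈ Metric.sphere (0 : Euc n) 1)
    (θ α : ℝ) (hα : 0 < α) (hACW : ACW μ θ α) (x : Euc n) (hx : x ≠ 0) (hn : 0 < n)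
    (z : Euc n) (hz : z ≠ 0) (hangle : InnerProductGeometry.angle x z < θ) :
    ∫ a, ‖kacStep x a z - x‖ ^ 2 ∂μ ≤ (1 - α / n) * ‖z - x‖ ^ 2 := by
  have hae : ∀ᵐ a ∂μ, ‖a‖ = 1 := by
    filter_upwards [hsupp] with a ha
    simpa [mem_sphere_iff_norm] using ha
  set w : Euc n := z - x with hw
  -- pointwise bound including the wedge indicator
  have hptwise : ∀ᵐ a ∂μ, ‖kacStep x a z - x‖ ^ 2 ≤
      ‖w‖ ^ 2 - ⟪a, w⟫ ^ 2 + Set.indicator (wedge x z) (fun a => 4 * ⟪a, w⟫ ^ 2) a := by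
    filter_upwards [hae] with a ha
    have h1 := kacStep_le x a z ha
    have h2 : (if sgn ⟪a, x⟫ ≠ sgn ⟪a, z⟫ then 4 * ⟪a, z - x⟫ ^ 2 else 0)
        = Set.indicator (wedge x z) (fun a => 4 * ⟪a, w⟫ ^ 2) a := by
      by_cases hmem : sgn ⟪a, x⟫ ≠ sgn ⟪a, z⟫
      · have hmem' : a ∈ wedge x z := ⟨by simpa [mem_sphere_iff_norm] using ha, hmem⟩
        rw [if_pos hmem, Set.indicator_of_mem hmem']
      · have hmem' : a ∉ wedge x z := fun hc => hmem hc.2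
        rw [if_neg hmem, Set.indicator_of_notMem hmem']
    rw [h2] at h1
    exact h1
  have hCS : ∀ᵐ a ∂μ, ⟪a, w⟫ ^ 2 ≤ ‖w‖ ^ 2 := by
    filter_upwards [hae] with a ha
    have h := abs_real_inner_le_norm a w
    rw [ha, one_mul] at h
    calc ⟪a, w⟫ ^ 2 = |⟪a, w⟫| ^ 2 := (sq_abs _).symm
      _ ≤ ‖w‖ ^ 2 := pow_le_pow_left₀ (abs_nonneg _) h 2
  -- integrability facts
  have hmg : Measurable fun a : Euc n => ⟪a, w⟫ ^ 2 := (measurable_inner_right w).pow_const 2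
  have hig : Integrable (fun a : Euc n => ⟪a, w⟫ ^ 2) μ := by
    refine Integrable.mono' (integrable_const (‖w‖ ^ 2)) hmg.aestronglyMeasurable ?_
    filter_upwards [hCS] with a ha
    rwa [Real.norm_eq_abs, abs_of_nonneg (sq_nonneg _)]
  have hiind : Integrable (Set.indicator (wedge x z) (fun a : Euc n => 4 * ⟪a, w⟫ ^ 2)) μ :=
    ((hig.const_mul 4).indicator (measurableSet_wedge x z))
  have hisub : Integrable (fun a : Euc n => ‖w‖ ^ 2 - ⟪a, w⟫ ^ 2) μ := by
    exact (integrable_const _).sub hig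
  have hiRHS : Integrable (fun a : Euc n => ‖w‖ ^ 2 - ⟪a, w⟫ ^ 2
      + Set.indicator (wedge x z) (fun a => 4 * ⟪a, w⟫ ^ 2) a) μ := by
    exact hisub.add hiind
  have hiLHS : Integrable (fun a : Euc n => ‖kacStep x a z - x‖ ^ 2) μ := by
    refine Integrable.mono' (integrable_const (5 * ‖w‖ ^ 2))
      (((measurable_kacStep_a x z).sub measurable_const).norm.pow_const 2).aestronglyMeasurable ?_
    filter_upwards [hptwise, hCS] with a h1 h2
    rw [Real.norm_eq_abs, abs_of_nonneg (by positivity)]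
    have hind : Set.indicator (wedge x z) (fun a => 4 * ⟪a, w⟫ ^ 2) a ≤ 4 * ⟪a, w⟫ ^ 2 := by
      by_cases hmem : a ∈ wedge x z
      · rw [Set.indicator_of_mem hmem]
      · rw [Set.indicator_of_notMem hmem]; positivity
    nlinarith
  -- integrate
  have hmono := integral_mono_ae hiLHS hiRHS hptwise
  have hsplit : ∫ a, (‖w‖ ^ 2 - ⟪a, w⟫ ^ 2
        + Set.indicator (wedge x z) (fun a => 4 * ⟪a, w⟫ ^ 2) a) ∂μ
      = ‖w‖ ^ 2 - (∫ a, ⟪a, w⟫ ^ 2 ∂μ) + 4 * ∫ a in wedge x z, ⟪a, w⟫ ^ 2 ∂μ := by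
    rw [integral_add hisub hiind,
      integral_sub (integrable_const _) hig, integral_const,
      integral_indicator (measurableSet_wedge x z), integral_const_mul]
    simp
  -- identify with quadratic forms
  have hq1 : ∫ a, ⟪a, w⟫ ^ 2 ∂μ = quadForm (covMat μ) w := by
    rw [integral_inner_sq μ hae w]; rfl
  have hq2 : ∫ a in wedge x z, ⟪a, w⟫ ^ 2 ∂μ = quadForm (covMatOn μ (wedge x z)) w := by
    rw [integral_inner_sq (μ.restrict (wedge x z)) (ae_restrict_of_ae hae) w]; rfl
  have hACWz := hACW x z hx hz hangle
  have hquad : α / n * ‖w‖ ^ 2 ≤ quadForm (covMat μ - (4 : ℝ) • covMatOn μ (wedge x z)) w :=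
    quadForm_ge_norm _ _ (by positivity) hACWz w
  rw [quadForm_sub, quadForm_smul] at hquad
  calc ∫ a, ‖kacStep x a z - x‖ ^ 2 ∂μ
      ≤ ‖w‖ ^ 2 - (∫ a, ⟪a, w⟫ ^ 2 ∂μ) + 4 * ∫ a in wedge x z, ⟪a, w⟫ ^ 2 ∂μ := by
        rw [← hsplit]; exact hmono
    _ ≤ ‖w‖ ^ 2 - α / n * ‖w‖ ^ 2 := by rw [hq1, hq2]; linarith
    _ = (1 - α / n) * ‖w‖ ^ 2 := by ring

open scoped Classical in
/-- Stopped Kaczmarz iteration: moves by a Kaczmarz step while the current point is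
in the region `R k`, otherwise stays put. -/
def stpFin {n : ℕ} (x x0 : Euc n) (R : ℕ → Set (Euc n)) : ∀ k, (Fin k → Euc n) → Euc n
  | 0, _ => x0
  | k + 1, u =>
    let z := stpFin x x0 R k (fun j => u j.castSucc)
    if z ∈ R k then kacStep x (u (Fin.last k)) z else z

lemma measurable_kacStep_pair {n : ℕ} (x : Euc n) :
    Measurable fun p : Euc n × Euc n => kacStep x p.1 p.2 := by
  unfold kacStep
  have hinner : Measurable fun p : Euc n × Euc n => (⟪p.1, p.2⟫ : ℝ) :=
    continuous_inner.measurable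
  have hinnerx : Measurable fun p : Euc n × Euc n => (⟪p.1, x⟫ : ℝ) :=
    (continuous_fst.inner continuous_const).measurable
  exact measurable_snd.add
    ((((measurable_sgn.comp hinner).mul hinnerx.abs).sub hinner).smul measurable_fst)

lemma measurable_stpFin {n : ℕ} (x x0 : Euc n) (R : ℕ → Set (Euc n))
    (hR : ∀ k, MeasurableSet (R k)) : ∀ k, Measurable (stpFin x x0 R k) := by
  intro k
  induction k with
  | zero => exact measurable_const
  | succ k ih =>
    have hφ : Measurable fun u : Fin (k + 1) → Euc n => (fun j : Fin k => u j.castSucc) :=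
      measurable_pi_lambda _ fun j => measurable_pi_apply _
    have hT : Measurable fun u : Fin (k + 1) → Euc n =>
        stpFin x x0 R k (fun j => u j.castSucc) := ih.comp hφ
    have hcond : MeasurableSet {u : Fin (k + 1) → Euc n |
        stpFin x x0 R k (fun j => u j.castSucc) ∈ R k} := hT (hR k)
    have hev : Measurable fun u : Fin (k + 1) → Euc n => u (Fin.last k) :=
      measurable_pi_apply _
    have hbr : Measurable fun u : Fin (k + 1) → Euc n =>
        kacStep x (u (Fin.last k)) (stpFin x x0 R k (fun j => u j.castSucc)) :=
      (measurable_kacStep_pair x).comp' (hev.prodMk hT)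
    simp only [stpFin]
    exact Measurable.ite hcond hbr hT

open scoped Classical in
lemma stpFin_succ {n : ℕ} (x x0 : Euc n) (R : ℕ → Set (Euc n)) (a : ℕ → Euc n) (k : ℕ) :
    stpFin x x0 R (k + 1) (fun j : Fin (k + 1) => a j) =
      (if stpFin x x0 R k (fun j : Fin k => a j) ∈ R k
        then kacStep x (a k) (stpFin x x0 R k (fun j : Fin k => a j))
        else stpFin x x0 R k (fun j : Fin k => a j)) := by
  simp only [stpFin, Fin.coe_castSucc, Fin.val_last]

lemma stpFin_eq_kacIter {n : ℕ} (x x0 : Euc n) (R : ℕ → Set (Euc n)) (a : ℕ → Euc n) :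
    ∀ m, (∀ j, j < m → kacIter x a x0 j ∈ R j) →
      stpFin x x0 R m (fun j : Fin m => a j) = kacIter x a x0 m := by
  intro m
  induction m with
  | zero => intro _; rfl
  | succ m ih =>
    intro h
    rw [stpFin_succ, ih (fun j hj => h j (hj.trans (Nat.lt_succ_self m))),
      if_pos (h m (Nat.lt_succ_self m))]
    rfl

lemma stpFin_frozen {n : ℕ} (x x0 : Euc n) (R : ℕ → Set (Euc n))
    (hmono : ∀ j k, j ≤ k → R k ⊆ R j) (a : ℕ → Euc n) (m : ℕ)
    (hm : stpFin x x0 R m (fun j : Fin m => a j) ∉ R m) :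
    ∀ k, m ≤ k → stpFin x x0 R k (fun j : Fin k => a j)
      = stpFin x x0 R m (fun j : Fin m => a j) := by
  intro k hk
  induction k, hk using Nat.le_induction with
  | base => rfl
  | succ k hmk ih =>
    rw [stpFin_succ, ih, if_neg (fun hc => hm (hmono m k hmk hc))]

lemma integrable_kac_sq {n : ℕ} (μ : Measure (Euc n)) [IsProbabilityMeasure μ]
    (hae : ∀ᵐ a ∂μ, ‖a‖ = 1) (x z : Euc n) :
    Integrable (fun a : Euc n => ‖kacStep x a z - x‖ ^ 2) μ := by
  refine Integrable.mono' (integrable_const (5 * ‖z - x‖ ^ 2))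
    (((measurable_kacStep_a x z).sub measurable_const).norm.pow_const 2).aestronglyMeasurable ?_
  filter_upwards [hae] with a ha
  rw [Real.norm_eq_abs, abs_of_nonneg (by positivity)]
  have h1 := kacStep_le x a z ha
  have hCS : ⟪a, z - x⟫ ^ 2 ≤ ‖z - x‖ ^ 2 := by
    have h := abs_real_inner_le_norm a (z - x)
    rw [ha, one_mul] at h
    calc ⟪a, z - x⟫ ^ 2 = |⟪a, z - x⟫| ^ 2 := (sq_abs _).symm
      _ ≤ ‖z - x‖ ^ 2 := pow_le_pow_left₀ (abs_nonneg _) h 2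
  by_cases hif : sgn ⟪a, x⟫ ≠ sgn ⟪a, z⟫
  · rw [if_pos hif] at h1; nlinarith
  · rw [if_neg hif] at h1; nlinarith

lemma alpha_div_le_one {n : ℕ} (μ : Measure (Euc n)) [IsProbabilityMeasure μ]
    (hsupp : ∀ᵐ a ∂μ, a ∈ Metric.sphere (0 : Euc n) 1)
    (θ α : ℝ) (hα : 0 < α) (hθ : 0 < θ) (hACW : ACW μ θ α) (x : Euc n) (hx : x ≠ 0)
    (hn : 0 < n) : α / n ≤ 1 := by
  have hae : ∀ᵐ a ∂μ, ‖a‖ = 1 := by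
    filter_upwards [hsupp] with a ha
    simpa [mem_sphere_iff_norm] using ha
  have h1 := hACW x x hx hx (by rwa [InnerProductGeometry.angle_self hx])
  rw [wedge_self, covMatOn_empty, smul_zero, sub_zero] at h1
  set v : Euc n := EuclideanSpace.single ⟨0, hn⟩ (1 : ℝ) with hv
  have hvn : ‖v‖ = 1 := by rw [hv, EuclideanSpace.norm_single]; norm_num
  have h2 : α / n ≤ quadForm (covMat μ) v :=
    lamMin_le_quadForm _ _ (by positivity) h1 v hvn
  have h3 : quadForm (covMat μ) v = ∫ a, ⟪a, v⟫ ^ 2 ∂μ := by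
    rw [integral_inner_sq μ hae v]; rfl
  have h4 : ∫ a, ⟪a, v⟫ ^ 2 ∂μ ≤ 1 := by
    have hig : Integrable (fun a : Euc n => ⟪a, v⟫ ^ 2) μ := by
      refine Integrable.mono' (integrable_const 1)
        ((measurable_inner_right v).pow_const 2).aestronglyMeasurable ?_
      filter_upwards [hae] with a ha
      rw [Real.norm_eq_abs, abs_of_nonneg (sq_nonneg _)]
      have h := abs_real_inner_le_norm a v
      rw [ha, hvn, one_mul] at h
      calc ⟪a, v⟫ ^ 2 = |⟪a, v⟫| ^ 2 := (sq_abs _).symm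
        _ ≤ 1 ^ 2 := pow_le_pow_left₀ (abs_nonneg _) h 2
        _ = 1 := one_pow 2
    calc ∫ a, ⟪a, v⟫ ^ 2 ∂μ ≤ ∫ _a, (1 : ℝ) ∂μ := by
          refine integral_mono_ae hig (integrable_const 1) ?_
          filter_upwards [hae] with a ha
          have h := abs_real_inner_le_norm a v
          rw [ha, hvn, one_mul] at h
          calc ⟪a, v⟫ ^ 2 = |⟪a, v⟫| ^ 2 := (sq_abs _).symm
            _ ≤ 1 ^ 2 := pow_le_pow_left₀ (abs_nonneg _) h 2
            _ = 1 := one_pow 2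
      _ = 1 := by simp
  linarith [h2, h3 ▸ h2, h4, h3.symm ▸ h4]

/-- One-step lintegral contraction for the kernel `μ`, at a point of the good region. -/
lemma inner_bound {n : ℕ} (μ : Measure (Euc n)) [IsProbabilityMeasure μ]
    (hsupp : ∀ᵐ a ∂μ, a ∈ Metric.sphere (0 : Euc n) 1)
    (θ α : ℝ) (hα : 0 < α) (hθ : 0 < θ) (hθ' : θ < Real.pi / 2) (hACW : ACW μ θ α)
    (x : Euc n) (hx : x ≠ 0) (hn : 0 < n)
    (h : Euc n → ℝ≥0∞) (hle : ∀ z, h z ≤ ENNReal.ofReal (‖z - x‖ ^ 2))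
    (z : Euc n) (hzG : z ∈ Metric.ball x (Real.sin θ * ‖x‖)) :
    ∫⁻ a, h (kacStep x a z) ∂μ ≤ ENNReal.ofReal ((1 - α / n) * ‖z - x‖ ^ 2) := by
  have hae : ∀ᵐ a ∂μ, ‖a‖ = 1 := by
    filter_upwards [hsupp] with a ha
    simpa [mem_sphere_iff_norm] using ha
  obtain ⟨hzne, hangle⟩ := region_lemma x z θ hθ hθ' hx (by rwa [mem_ball_iff_norm] at hzG)
  calc ∫⁻ a, h (kacStep x a z) ∂μ
      ≤ ∫⁻ a, ENNReal.ofReal (‖kacStep x a z - x‖ ^ 2) ∂μ := lintegral_mono fun a => hle _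
    _ = ENNReal.ofReal (∫ a, ‖kacStep x a z - x‖ ^ 2 ∂μ) :=
        (ofReal_integral_eq_lintegral_ofReal (integrable_kac_sq μ hae x z)
          (Filter.Eventually.of_forall fun a => by positivity)).symm
    _ ≤ ENNReal.ofReal ((1 - α / n) * ‖z - x‖ ^ 2) := by
        apply ENNReal.ofReal_le_ofReal
        exact step_contraction μ hsupp θ α hα hACW x hx hn z hzne hangle

/-- Independence/Fubini core: the expectation of a function of the first `k` samples
and the `k`-th sample splits as an iterated integral. -/
lemma lint_indep_step {n : ℕ} {Ω : Type} [MeasurableSpace Ω] (P : Measure Ω)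
    [IsProbabilityMeasure P] (μ : Measure (Euc n)) [IsProbabilityMeasure μ]
    (A : ℕ → Ω → Euc n)
    (hmeas : ∀ i, Measurable (A i))
    (hindep : iIndepFun A P)
    (hdist : ∀ i, Measure.map (A i) P = μ)
    (k : ℕ) (F : (Fin k → Euc n) → Euc n → ℝ≥0∞)
    (hF : Measurable (Function.uncurry F)) :
    ∫⁻ ω, F (fun j : Fin k => A j ω) (A k ω) ∂P
      = ∫⁻ u, ∫⁻ a, F u a ∂μ ∂(P.map fun ω (j : Fin k) => A j ω) := by
  have hU : Measurable fun ω (j : Fin k) => A j ω :=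
    measurable_pi_lambda _ fun j => hmeas j
  have hindepUV : IndepFun (fun ω (j : Fin k) => A j ω) (A k) P := by
    have hST : Disjoint (Finset.range k) ({k} : Finset ℕ) := by
      simp only [Finset.disjoint_left, Finset.mem_range, Finset.mem_singleton]
      omega
    have h0 := hindep.indepFun_finset (Finset.range k) {k} hST hmeas
    have hψ : Measurable fun v : {i // i ∈ Finset.range k} → Euc n =>
        (fun j : Fin k => v ⟨(j : ℕ), Finset.mem_range.mpr j.isLt⟩) :=
      measurable_pi_lambda _ fun j => measurable_pi_apply _
    have hρ : Measurable fun v : {i // i ∈ ({k} : Finset ℕ)} → Euc n =>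
        v ⟨k, Finset.mem_singleton_self k⟩ := measurable_pi_apply _
    exact h0.comp hψ hρ
  have hmap : P.map (fun ω => ((fun j : Fin k => A j ω), A k ω))
      = (P.map fun ω (j : Fin k) => A j ω).prod μ := by
    rw [← hdist k]
    exact (ProbabilityTheory.indepFun_iff_map_prod_eq_prod_map_map
      hU.aemeasurable (hmeas k).aemeasurable).mp hindepUV
  calc ∫⁻ ω, F (fun j : Fin k => A j ω) (A k ω) ∂P
      = ∫⁻ p, Function.uncurry F p ∂(P.map fun ω => ((fun j : Fin k => A j ω), A k ω)) := by
        rw [lintegral_map hF (hU.prodMk (hmeas k))]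
        rfl
    _ = ∫⁻ p, Function.uncurry F p
          ∂((P.map fun ω (j : Fin k) => A j ω).prod μ) := by rw [hmap]
    _ = ∫⁻ u, ∫⁻ a, F u a ∂μ ∂(P.map fun ω (j : Fin k) => A j ω) :=
        lintegral_prod _ hF.aemeasurable

open scoped Classical in
/-- One-step inequality for the stopped process. -/
lemma lint_stp_succ {n : ℕ} (μ : Measure (Euc n)) [IsProbabilityMeasure μ]
    (hsupp : ∀ᵐ a ∂μ, a ∈ Metric.sphere (0 : Euc n) 1)
    (θ α : ℝ) (hα : 0 < α) (hθ : 0 < θ) (hθ' : θ < Real.pi / 2) (hACW : ACW μ θ α)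
    (x : Euc n) (hx : x ≠ 0) (hn : 0 < n) (hq : α / n ≤ 1)
    {Ω : Type} [MeasurableSpace Ω] (P : Measure Ω) [IsProbabilityMeasure P]
    (A : ℕ → Ω → Euc n) (hmeas : ∀ i, Measurable (A i))
    (hindep : iIndepFun A P)
    (hdist : ∀ i, Measure.map (A i) P = μ) (x0 : Euc n)
    (R : ℕ → Set (Euc n)) (hRmeas : ∀ k, MeasurableSet (R k))
    (hRG : ∀ k, R k ⊆ Metric.ball x (Real.sin θ * ‖x‖))
    (h : Euc n → ℝ≥0∞) (hh : Measurable h)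
    (hle : ∀ z, h z ≤ ENNReal.ofReal (‖z - x‖ ^ 2))
    (hG : ∀ z ∈ Metric.ball x (Real.sin θ * ‖x‖), h z = ENNReal.ofReal (‖z - x‖ ^ 2))
    (k : ℕ) (c : ℝ≥0∞)
    (hc : c = 1 ∨ (c = ENNReal.ofReal (1 - α / n)
      ∧ Metric.ball x (Real.sin θ * ‖x‖) ⊆ R k ∧ ∀ z, z ∉ R k → h z = 0)) :
    ∫⁻ ω, h (stpFin x x0 R (k + 1) (fun j : Fin (k + 1) => A j ω)) ∂P
      ≤ c * ∫⁻ ω, h (stpFin x x0 R k (fun j : Fin k => A j ω)) ∂P := by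
  set T := stpFin x x0 R k with hT
  have hTm : Measurable T := measurable_stpFin x x0 R hRmeas k
  set F : (Fin k → Euc n) → Euc n → ℝ≥0∞ :=
    fun u a => h (if T u ∈ R k then kacStep x a (T u) else T u) with hF
  have hFm : Measurable (Function.uncurry F) := by
    have h1 : Function.uncurry F = fun p : (Fin k → Euc n) × Euc n =>
        h (if T p.1 ∈ R k then kacStep x p.2 (T p.1) else T p.1) := rfl
    rw [h1]
    apply hh.comp'
    exact Measurable.ite ((hTm.comp measurable_fst) (hRmeas k))
      ((measurable_kacStep_pair x).comp' (measurable_snd.prodMk (hTm.comp measurable_fst)))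
      (hTm.comp measurable_fst)
  have hLHSeq : ∀ ω : Ω, h (stpFin x x0 R (k + 1) fun j : Fin (k + 1) => A j ω)
      = F (fun j : Fin k => A j ω) (A k ω) := by
    intro ω
    rw [stpFin_succ x x0 R (fun i => A i ω) k]
  have hpt : ∀ u : Fin k → Euc n, ∫⁻ a, F u a ∂μ ≤ c * h (T u) := by
    intro u
    by_cases hTu : T u ∈ R k
    · have h1 : ∫⁻ a, F u a ∂μ = ∫⁻ a, h (kacStep x a (T u)) ∂μ := by
        simp only [hF, if_pos hTu]
      have h2 := inner_bound μ hsupp θ α hα hθ hθ' hACW x hx hn h hle (T u) (hRG k hTu)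
      have hG' := hG (T u) (hRG k hTu)
      have hq0 : (0 : ℝ) ≤ α / n := by positivity
      rcases hc with rfl | ⟨rfl, _, _⟩
      · rw [one_mul, hG', h1]
        refine h2.trans (ENNReal.ofReal_le_ofReal ?_)
        nlinarith [sq_nonneg ‖T u - x‖]
      · rw [hG', ← ENNReal.ofReal_mul (by linarith), h1]
        exact h2
    · have h1 : ∫⁻ a, F u a ∂μ = h (T u) := by
        simp only [hF, if_neg hTu]
        rw [lintegral_const]
        simp
      rcases hc with rfl | ⟨rfl, hsub, hzero⟩
      · rw [one_mul]; exact le_of_eq h1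
      · rw [h1, hzero (T u) hTu]
        simp
  have hU : Measurable fun ω (j : Fin k) => A j ω :=
    measurable_pi_lambda _ fun j => hmeas j
  calc ∫⁻ ω, h (stpFin x x0 R (k + 1) fun j : Fin (k + 1) => A j ω) ∂P
      = ∫⁻ ω, F (fun j : Fin k => A j ω) (A k ω) ∂P := lintegral_congr hLHSeq
    _ = ∫⁻ u, ∫⁻ a, F u a ∂μ ∂(P.map fun ω (j : Fin k) => A j ω) :=
        lint_indep_step P μ A hmeas hindep hdist k F hFm
    _ ≤ ∫⁻ u, c * h (T u) ∂(P.map fun ω (j : Fin k) => A j ω) := lintegral_mono hpt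
    _ = c * ∫⁻ u, h (T u) ∂(P.map fun ω (j : Fin k) => A j ω) :=
        lintegral_const_mul c (show Measurable fun u => h (T u) from hh.comp hTm)
    _ = c * ∫⁻ ω, h (T ((fun ω (j : Fin k) => A j ω) ω)) ∂P := by
        rw [lintegral_map (show Measurable fun u => h (T u) from hh.comp hTm) hU]
    _ = c * ∫⁻ ω, h (stpFin x x0 R k fun j : Fin k => A j ω) ∂P := rfl

lemma kacIter_fixed {n : ℕ} (x : Euc n) (a : ℕ → Euc n) : ∀ k, kacIter x a x k = x := by
  intro k
  induction k with
  | zero => rfl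
  | succ k ih => rw [kacIter, ih, kacStep_self]

/-- Ville-type bound: if each tail event has probability at most `c` (for large indices),
so does their increasing union of eventual intersections. -/
lemma ville {Ω : Type} [MeasurableSpace Ω] (P : Measure Ω) (B : ℕ → Set Ω) (K : ℕ)
    (c : ℝ≥0∞) (hB : ∀ k, K ≤ k → P (B k) ≤ c) :
    P (⋃ m, ⋂ k, ⋂ (_ : m ≤ k), B k) ≤ c := by
  have hmono : Monotone fun m => ⋂ k, ⋂ (_ : m ≤ k), B k := by
    intro m m' hmm'
    refine Set.iInter₂_mono' fun k hk => ⟨k, hmm'.trans hk, subset_rfl⟩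
  rw [hmono.directed_le.measure_iUnion]
  refine iSup_le fun m => ?_
  refine le_trans (measure_mono ?_) (hB (max m K) (le_max_right m K))
  exact Set.biInter_subset_of_mem (le_max_left m K)

end AuxProof

/-- **Corollary (Linear convergence for an ACW measure, high probability).**
Fix `ε > 0`, `0 < δ₁ ≤ 1/2`, `0 < δ₂ ≤ 1`. Suppose `μ` is an `ACW(θ, α)` probability
measure on `S^{n−1}`, `x ≠ 0`, and `‖x₀ − x‖ ≤ √δ₁ sin(θ) ‖x‖`. Then with
probability at least `1 − δ₁ − δ₂`: whenever `k ≥ (log(2/ε) + log(1/δ₂)) n / α`,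
the generalized randomized Kaczmarz iterate satisfies `‖X_k − x‖² ≤ ε‖x₀ − x‖²`. -/
theorem linear_convergence_ACW_high_probability {n : ℕ} (μ : Measure (Euc n))
    [IsProbabilityMeasure μ]
    (hsupp : ∀ᵐ a ∂μ, a ∈ Metric.sphere (0 : Euc n) 1)
    (θ α : ℝ) (hα : 0 < α) (hθ : 0 < θ) (hθ' : θ < Real.pi / 2) (hACW : ACW μ θ α)
    (x : Euc n) (hx : x ≠ 0) (ε δ₁ δ₂ : ℝ) (hε : 0 < ε) (hδ₁ : 0 < δ₁)
    (hδ₁' : δ₁ ≤ 1 / 2) (hδ₂ : 0 < δ₂) (hδ₂' : δ₂ ≤ 1)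
    {Ω : Type} [MeasurableSpace Ω] (P : Measure Ω) [IsProbabilityMeasure P]
    (A : ℕ → Ω → Euc n) (hmeas : ∀ i, Measurable (A i))
    (hindep : iIndepFun A P)
    (hdist : ∀ i, Measure.map (A i) P = μ)
    (x0 : Euc n) (hx0 : ‖x0 - x‖ ≤ Real.sqrt δ₁ * Real.sin θ * ‖x‖) :
    P {ω | ∀ k : ℕ,
        (k : ℝ) ≥ (Real.log (2 / ε) + Real.log (1 / δ₂)) * n / α →
        ‖kacIter x (fun i => A i ω) x0 k - x‖ ^ 2 ≤ ε * ‖x0 - x‖ ^ 2} ≥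
      ENNReal.ofReal (1 - δ₁ - δ₂) := by
  classical
  set v : ℝ := (Real.log (2 / ε) + Real.log (1 / δ₂)) * n / α with hv
  by_cases hx0x : x0 = x
  · have hset : {ω : Ω | ∀ k : ℕ, (k : ℝ) ≥ v →
        ‖kacIter x (fun i => A i ω) x0 k - x‖ ^ 2 ≤ ε * ‖x0 - x‖ ^ 2} = Set.univ := by
      ext ω
      simp only [Set.mem_setOf_eq, Set.mem_univ, iff_true]
      intro k _
      rw [hx0x, kacIter_fixed]
      simp [sub_self, norm_zero]
    rw [hset, measure_univ]
    exact ENNReal.ofReal_le_one.mpr (by linarith)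
  -- main case
  have hn : 0 < n := by
    rcases Nat.eq_zero_or_pos n with h0 | h
    · exfalso
      apply hx
      subst h0
      ext i
      exact absurd i.isLt (Nat.not_lt_zero _)
    · exact h
  have hθπ : θ < Real.pi := lt_trans hθ' (by linarith [Real.pi_pos])
  have hsinθ : 0 < Real.sin θ := Real.sin_pos_of_pos_of_lt_pi hθ hθπ
  have hxn : 0 < ‖x‖ := norm_pos_iff.mpr hx
  set r : ℝ := Real.sin θ * ‖x‖ with hr
  have hrpos : 0 < r := mul_pos hsinθ hxn
  set G : Set (Euc n) := Metric.ball x r with hGdef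
  set Y₀ : ℝ := ‖x0 - x‖ ^ 2 with hY₀
  have hY₀pos : 0 < Y₀ := pow_pos (norm_pos_iff.mpr (sub_ne_zero.mpr hx0x)) 2
  have hnorm_le : ‖x0 - x‖ ≤ Real.sqrt δ₁ * r := by rw [hr, ← mul_assoc]; exact hx0
  have hsq : Y₀ ≤ δ₁ * r ^ 2 := by
    calc Y₀ ≤ (Real.sqrt δ₁ * r) ^ 2 := pow_le_pow_left₀ (norm_nonneg _) hnorm_le 2
      _ = δ₁ * r ^ 2 := by rw [mul_pow, Real.sq_sqrt hδ₁.le]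
  have hx0G : x0 ∈ G := by
    rw [hGdef, Metric.mem_ball, dist_eq_norm]
    have hs1 : Real.sqrt δ₁ < 1 := by
      rw [show (1 : ℝ) = Real.sqrt 1 from Real.sqrt_one.symm]
      exact Real.sqrt_lt_sqrt hδ₁.le (by linarith)
    calc ‖x0 - x‖ ≤ Real.sqrt δ₁ * r := hnorm_le
      _ < 1 * r := mul_lt_mul_of_pos_right hs1 hrpos
      _ = r := one_mul r
  set q : ℝ := α / n with hqdef
  have hq0 : 0 < q := by positivity
  have hq1 : q ≤ 1 := alpha_div_le_one μ hsupp θ α hα hθ hACW x hx hn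
  set K : ℕ := ⌈max 0 v⌉₊ with hK
  have hKv : v ≤ (K : ℝ) := le_trans (le_max_right 0 v) (Nat.le_ceil _)
  have hcK : (1 - q) ^ K ≤ ε * δ₂ / 2 := by
    have he1 : (1 - q) ^ K ≤ Real.exp (-q) ^ K :=
      pow_le_pow_left₀ (by linarith) (by linarith [Real.add_one_le_exp (-q)]) K
    have he2 : Real.exp (-q) ^ K = Real.exp (-(q * K)) := by
      rw [← Real.exp_nat_mul]
      congr 1
      ring
    have he3 : Real.exp (-(q * K)) ≤ Real.exp (-(q * v)) :=
      Real.exp_le_exp.mpr (by nlinarith)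
    have he4 : -(q * v) = -(Real.log (2 / ε) + Real.log (1 / δ₂)) := by
      rw [hv, hqdef]
      have hn0 : (n : ℝ) ≠ 0 := Nat.cast_ne_zero.mpr hn.ne'
      field_simp
    have he5 : Real.exp (-(Real.log (2 / ε) + Real.log (1 / δ₂))) = ε / 2 * δ₂ := by
      rw [neg_add, Real.exp_add, Real.exp_neg, Real.exp_neg,
        Real.exp_log (by positivity), Real.exp_log (by positivity)]
      field_simp
    calc (1 - q) ^ K ≤ Real.exp (-q) ^ K := he1
      _ = Real.exp (-(q * K)) := he2
      _ ≤ Real.exp (-(q * v)) := he3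
      _ = ε / 2 * δ₂ := by rw [he4, he5]
      _ = ε * δ₂ / 2 := by ring
  -- the two auxiliary processes
  set h₁ : Euc n → ℝ≥0∞ := fun z => ENNReal.ofReal (‖z - x‖ ^ 2) with hh₁
  set h₂ : Euc n → ℝ≥0∞ := G.indicator h₁ with hh₂
  set R₁ : ℕ → Set (Euc n) := fun _ => G with hR₁
  set D : Set (Euc n) := G ∩ {z : Euc n | ‖z - x‖ ^ 2 ≤ ε * Y₀} with hD
  set R₂ : ℕ → Set (Euc n) := fun k => if k < K then G else D with hR₂def
  have hm₁ : Measurable h₁ :=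
    ((continuous_id.sub continuous_const).norm.pow 2).measurable.ennreal_ofReal
  have hGmeas : MeasurableSet G := Metric.isOpen_ball.measurableSet
  have hm₂ : Measurable h₂ := hm₁.indicator hGmeas
  have hle₁ : ∀ z : Euc n, h₁ z ≤ ENNReal.ofReal (‖z - x‖ ^ 2) := fun z => le_refl _
  have hle₂ : ∀ z : Euc n, h₂ z ≤ ENNReal.ofReal (‖z - x‖ ^ 2) := by
    intro z
    by_cases hz : z ∈ G
    · rw [hh₂, Set.indicator_of_mem hz]
    · rw [hh₂, Set.indicator_of_notMem hz]
      exact zero_le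
  have hGeq₁ : ∀ z ∈ Metric.ball x (Real.sin θ * ‖x‖), h₁ z = ENNReal.ofReal (‖z - x‖ ^ 2) :=
    fun z _ => rfl
  have hGeq₂ : ∀ z ∈ Metric.ball x (Real.sin θ * ‖x‖), h₂ z = ENNReal.ofReal (‖z - x‖ ^ 2) := by
    intro z hz
    rw [hh₂, Set.indicator_of_mem hz]
  have hR₁meas : ∀ k, MeasurableSet (R₁ k) := fun _ => hGmeas
  have hR₁G : ∀ k, R₁ k ⊆ Metric.ball x (Real.sin θ * ‖x‖) := fun _ => subset_rfl
  have hDmeas : MeasurableSet D :=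
    hGmeas.inter (measurableSet_le ((continuous_id.sub continuous_const).norm.pow 2).measurable
      measurable_const)
  have hR₂meas : ∀ k, MeasurableSet (R₂ k) := by
    intro k
    simp only [hR₂def]
    by_cases hk : k < K
    · rw [if_pos hk]; exact hGmeas
    · rw [if_neg hk]; exact hDmeas
  have hR₂G : ∀ k, R₂ k ⊆ Metric.ball x (Real.sin θ * ‖x‖) := by
    intro k
    simp only [hR₂def]
    by_cases hk : k < K
    · rw [if_pos hk]
    · rw [if_neg hk]; exact Set.inter_subset_left
  have hR₂mono : ∀ j k : ℕ, j ≤ k → R₂ k ⊆ R₂ j := by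
    intro j k hjk z hz
    simp only [hR₂def] at hz ⊢
    by_cases hjK : j < K
    · rw [if_pos hjK]
      by_cases hkK : k < K
      · rwa [if_pos hkK] at hz
      · rw [if_neg hkK] at hz
        exact hz.1
    · have hkK : ¬ k < K := fun hkK => hjK (lt_of_le_of_lt hjk hkK)
      rw [if_neg hjK]
      rwa [if_neg hkK] at hz
  have hstep := lint_stp_succ μ hsupp θ α hα hθ hθ' hACW x hx hn hq1 P A hmeas hindep hdist x0
  -- expectation bound for the first process
  have hIn1 : ∀ k, ∫⁻ ω, h₁ (stpFin x x0 R₁ k (fun j : Fin k => A j ω)) ∂P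
      ≤ ENNReal.ofReal Y₀ := by
    intro k
    induction k with
    | zero =>
      have : ∀ ω : Ω, h₁ (stpFin x x0 R₁ 0 (fun j : Fin 0 => A j ω)) = ENNReal.ofReal Y₀ :=
        fun ω => rfl
      rw [lintegral_congr this, lintegral_const, measure_univ, mul_one]
    | succ k ih =>
      refine (hstep R₁ hR₁meas hR₁G h₁ hm₁ hle₁ hGeq₁ k 1 (Or.inl rfl)).trans ?_
      rw [one_mul]
      exact ih
  -- expectation bound for the second process
  have hIn2 : ∀ k, ∫⁻ ω, h₂ (stpFin x x0 R₂ k (fun j : Fin k => A j ω)) ∂P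
      ≤ ENNReal.ofReal (1 - q) ^ (min k K) * ENNReal.ofReal Y₀ := by
    intro k
    induction k with
    | zero =>
      have hz : ∀ ω : Ω, h₂ (stpFin x x0 R₂ 0 (fun j : Fin 0 => A j ω)) = ENNReal.ofReal Y₀ :=
        fun ω => by rw [show stpFin x x0 R₂ 0 (fun j : Fin 0 => A j ω) = x0 from rfl, hh₂,
          Set.indicator_of_mem hx0G]
      rw [lintegral_congr hz, lintegral_const, measure_univ, mul_one]
      simp
    | succ k ih =>
      by_cases hkK : k < K
      · have hGsub : Metric.ball x (Real.sin θ * ‖x‖) ⊆ R₂ k := by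
          simp only [hR₂def]
          rw [if_pos hkK]
        have hzero : ∀ z, z ∉ R₂ k → h₂ z = 0 := by
          intro z hz
          simp only [hR₂def] at hz
          rw [if_pos hkK] at hz
          rw [hh₂, Set.indicator_of_notMem hz]
        have hs := hstep R₂ hR₂meas hR₂G h₂ hm₂ hle₂ hGeq₂ k (ENNReal.ofReal (1 - q))
          (Or.inr ⟨rfl, hGsub, hzero⟩)
        have hmin1 : min (k + 1) K = k + 1 := min_eq_left hkK
        have hmin2 : min k K = k := min_eq_left hkK.le
        rw [hmin1]
        calc ∫⁻ ω, h₂ (stpFin x x0 R₂ (k + 1) (fun j : Fin (k + 1) => A j ω)) ∂P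
            ≤ ENNReal.ofReal (1 - q)
              * ∫⁻ ω, h₂ (stpFin x x0 R₂ k (fun j : Fin k => A j ω)) ∂P := hs
          _ ≤ ENNReal.ofReal (1 - q)
              * (ENNReal.ofReal (1 - q) ^ (min k K) * ENNReal.ofReal Y₀) :=
              mul_le_mul_right ih _
          _ = ENNReal.ofReal (1 - q) ^ (k + 1) * ENNReal.ofReal Y₀ := by
              rw [hmin2, pow_succ]
              ring
      · have hKk : K ≤ k := Nat.le_of_not_lt hkK
        have hmin1 : min (k + 1) K = K := min_eq_right (hKk.trans (Nat.le_succ k))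
        have hmin2 : min k K = K := min_eq_right hKk
        rw [hmin1]
        refine (hstep R₂ hR₂meas hR₂G h₂ hm₂ hle₂ hGeq₂ k 1 (Or.inl rfl)).trans ?_
        rw [one_mul, ← hmin2]
        exact ih
  -- Markov bounds
  set B₁ : ℕ → Set Ω := fun k =>
    {ω | ENNReal.ofReal (r ^ 2) ≤ h₁ (stpFin x x0 R₁ k (fun j : Fin k => A j ω))} with hB₁def
  set B₂ : ℕ → Set Ω := fun k =>
    {ω | ENNReal.ofReal (ε * Y₀) ≤ h₂ (stpFin x x0 R₂ k (fun j : Fin k => A j ω))} with hB₂def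
  have hUk : ∀ k : ℕ, Measurable fun ω (j : Fin k) => A j ω :=
    fun k => measurable_pi_lambda _ fun j => hmeas j
  have hprob₁ : ∀ k, P (B₁ k) ≤ ENNReal.ofReal δ₁ := by
    intro k
    have hf : AEMeasurable (fun ω => h₁ (stpFin x x0 R₁ k (fun j : Fin k => A j ω))) P :=
      ((hm₁.comp (measurable_stpFin x x0 R₁ hR₁meas k)).comp (hUk k)).aemeasurable
    have hmkv := meas_ge_le_lintegral_div hf (ε := ENNReal.ofReal (r ^ 2))
      (by simp [ENNReal.ofReal_eq_zero]; positivity) ENNReal.ofReal_ne_top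
    refine le_trans hmkv ?_
    calc (∫⁻ ω, h₁ (stpFin x x0 R₁ k (fun j : Fin k => A j ω)) ∂P) / ENNReal.ofReal (r ^ 2)
        ≤ ENNReal.ofReal Y₀ / ENNReal.ofReal (r ^ 2) :=
          ENNReal.div_le_div_right (hIn1 k) _
      _ ≤ ENNReal.ofReal (δ₁ * r ^ 2) / ENNReal.ofReal (r ^ 2) :=
          ENNReal.div_le_div_right (ENNReal.ofReal_le_ofReal hsq) _
      _ = ENNReal.ofReal (δ₁ * r ^ 2 / r ^ 2) :=
          (ENNReal.ofReal_div_of_pos (by positivity)).symm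
      _ = ENNReal.ofReal δ₁ := by
          rw [mul_div_assoc, div_self (by positivity : (r : ℝ) ^ 2 ≠ 0), mul_one]
  have hprob₂ : ∀ k, K ≤ k → P (B₂ k) ≤ ENNReal.ofReal (δ₂ / 2) := by
    intro k hKk
    have hf : AEMeasurable (fun ω => h₂ (stpFin x x0 R₂ k (fun j : Fin k => A j ω))) P :=
      ((hm₂.comp (measurable_stpFin x x0 R₂ hR₂meas k)).comp (hUk k)).aemeasurable
    have hmkv := meas_ge_le_lintegral_div hf (ε := ENNReal.ofReal (ε * Y₀))
      (by simp [ENNReal.ofReal_eq_zero]; positivity) ENNReal.ofReal_ne_top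
    refine le_trans hmkv ?_
    have hIn2' : ∫⁻ ω, h₂ (stpFin x x0 R₂ k (fun j : Fin k => A j ω)) ∂P
        ≤ ENNReal.ofReal (ε * δ₂ / 2 * Y₀) := by
      refine (hIn2 k).trans ?_
      rw [min_eq_right hKk, ← ENNReal.ofReal_pow (by linarith), ← ENNReal.ofReal_mul
        (pow_nonneg (by linarith) K)]
      exact ENNReal.ofReal_le_ofReal (by nlinarith)
    calc (∫⁻ ω, h₂ (stpFin x x0 R₂ k (fun j : Fin k => A j ω)) ∂P) / ENNReal.ofReal (ε * Y₀)
        ≤ ENNReal.ofReal (ε * δ₂ / 2 * Y₀) / ENNReal.ofReal (ε * Y₀) :=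
          ENNReal.div_le_div_right hIn2' _
      _ = ENNReal.ofReal (ε * δ₂ / 2 * Y₀ / (ε * Y₀)) :=
          (ENNReal.ofReal_div_of_pos (by positivity)).symm
      _ = ENNReal.ofReal (δ₂ / 2) := by
          congr 1
          field_simp
  have hV₁ := ville P B₁ 0 (ENNReal.ofReal δ₁) (fun k _ => hprob₁ k)
  have hV₂ := ville P B₂ K (ENNReal.ofReal (δ₂ / 2)) hprob₂
  -- covering event
  set T : Set Ω := {ω : Ω | ∀ k : ℕ, (k : ℝ) ≥ v →
      ‖kacIter x (fun i => A i ω) x0 k - x‖ ^ 2 ≤ ε * Y₀} with hT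
  have hcover : (Set.univ : Set Ω) ⊆
      T ∪ ((⋃ m, ⋂ k, ⋂ (_ : m ≤ k), B₁ k) ∪ (⋃ m, ⋂ k, ⋂ (_ : m ≤ k), B₂ k)) := by
    intro ω _
    by_cases hU₁ : ω ∈ ⋃ m, ⋂ k, ⋂ (_ : m ≤ k), B₁ k
    · exact Or.inr (Or.inl hU₁)
    by_cases hU₂ : ω ∈ ⋃ m, ⋂ k, ⋂ (_ : m ≤ k), B₂ k
    · exact Or.inr (Or.inr hU₂)
    left
    -- the trajectory never exits G
    have hexit : ∀ k, kacIter x (fun i => A i ω) x0 k ∈ G := by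
      by_contra hex
      push_neg at hex
      obtain ⟨k₀, hk₀⟩ := hex
      have hexx : ∃ m, kacIter x (fun i => A i ω) x0 m ∉ G := ⟨k₀, hk₀⟩
      set m := Nat.find hexx with hm
      have hms := Nat.find_spec hexx
      have hmin : ∀ j, j < m → kacIter x (fun i => A i ω) x0 j ∈ R₁ j := by
        intro j hj
        have := Nat.find_min hexx hj
        rw [not_not] at this
        exact this
      have htraj : stpFin x x0 R₁ m (fun j : Fin m => A j ω)
          = kacIter x (fun i => A i ω) x0 m :=
        stpFin_eq_kacIter x x0 R₁ (fun i => A i ω) m hmin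
      have hnotR : stpFin x x0 R₁ m (fun j : Fin m => A j ω) ∉ R₁ m := by
        rw [htraj]
        exact hms
      apply hU₁
      refine Set.mem_iUnion.mpr ⟨m, Set.mem_iInter.mpr fun k => Set.mem_iInter.mpr fun hk => ?_⟩
      have hfroz := stpFin_frozen x x0 R₁ (fun j k _ => subset_rfl) (fun i => A i ω) m hnotR k hk
      show ENNReal.ofReal (r ^ 2) ≤ h₁ (stpFin x x0 R₁ k (fun j : Fin k => A j ω))
      rw [hfroz, htraj]
      apply ENNReal.ofReal_le_ofReal
      have : r ≤ ‖kacIter x (fun i => A i ω) x0 m - x‖ := by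
        rw [← dist_eq_norm]
        exact not_lt.mp (fun hc => hms (Metric.mem_ball.mpr hc))
      exact pow_le_pow_left₀ hrpos.le this 2
    -- after time K the squared error stays small
    have hbound : ∀ k, K ≤ k → ‖kacIter x (fun i => A i ω) x0 k - x‖ ^ 2 ≤ ε * Y₀ := by
      by_contra hbad
      push_neg at hbad
      obtain ⟨k₀, hk₀K, hk₀⟩ := hbad
      have hexx : ∃ m, K ≤ m ∧ ε * Y₀ < ‖kacIter x (fun i => A i ω) x0 m - x‖ ^ 2 :=
        ⟨k₀, hk₀K, hk₀⟩
      set m := Nat.find hexx with hm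
      obtain ⟨hmK, hmY⟩ := Nat.find_spec hexx
      have hmin : ∀ j, j < m → kacIter x (fun i => A i ω) x0 j ∈ R₂ j := by
        intro j hj
        simp only [hR₂def]
        by_cases hjK : j < K
        · rw [if_pos hjK]
          exact hexit j
        · rw [if_neg hjK]
          have hnot := Nat.find_min hexx hj
          push_neg at hnot
          exact ⟨hexit j, hnot (Nat.le_of_not_lt hjK)⟩
      have htraj : stpFin x x0 R₂ m (fun j : Fin m => A j ω)
          = kacIter x (fun i => A i ω) x0 m :=
        stpFin_eq_kacIter x x0 R₂ (fun i => A i ω) m hmin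
      have hnotR : stpFin x x0 R₂ m (fun j : Fin m => A j ω) ∉ R₂ m := by
        rw [htraj]
        simp only [hR₂def]
        rw [if_neg (Nat.not_lt.mpr hmK)]
        intro hc
        exact absurd hmY (not_lt.mpr hc.2)
      apply hU₂
      refine Set.mem_iUnion.mpr ⟨m, Set.mem_iInter.mpr fun k => Set.mem_iInter.mpr fun hk => ?_⟩
      have hfroz := stpFin_frozen x x0 R₂ hR₂mono (fun i => A i ω) m hnotR k hk
      show ENNReal.ofReal (ε * Y₀) ≤ h₂ (stpFin x x0 R₂ k (fun j : Fin k => A j ω))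
      rw [hfroz, htraj, hh₂, Set.indicator_of_mem (hexit m)]
      exact ENNReal.ofReal_le_ofReal hmY.le
    -- conclude membership in T
    intro k hkv
    have hKk : K ≤ k := by
      rw [hK]
      refine Nat.ceil_le.mpr (max_le (Nat.cast_nonneg k) hkv)
    exact hbound k hKk
  -- final arithmetic
  have h1 : (1 : ℝ≥0∞) ≤ P T + (ENNReal.ofReal δ₁ + ENNReal.ofReal (δ₂ / 2)) := by
    calc (1 : ℝ≥0∞) = P Set.univ := measure_univ.symm
      _ ≤ P (T ∪ ((⋃ m, ⋂ k, ⋂ (_ : m ≤ k), B₁ k) ∪ (⋃ m, ⋂ k, ⋂ (_ : m ≤ k), B₂ k))) :=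
          measure_mono hcover
      _ ≤ P T + P ((⋃ m, ⋂ k, ⋂ (_ : m ≤ k), B₁ k) ∪ (⋃ m, ⋂ k, ⋂ (_ : m ≤ k), B₂ k)) :=
          measure_union_le _ _
      _ ≤ P T + (P (⋃ m, ⋂ k, ⋂ (_ : m ≤ k), B₁ k) + P (⋃ m, ⋂ k, ⋂ (_ : m ≤ k), B₂ k)) :=
          add_le_add_right (measure_union_le _ _) _
      _ ≤ P T + (ENNReal.ofReal δ₁ + ENNReal.ofReal (δ₂ / 2)) :=
          add_le_add_right (add_le_add hV₁ hV₂) _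
  have hPTne : P T ≠ ⊤ := measure_ne_top P T
  have h2 : (1 : ℝ) ≤ (P T).toReal + (δ₁ + δ₂ / 2) := by
    have htr := ENNReal.toReal_mono (by finiteness) h1
    rw [ENNReal.toReal_one] at htr
    rw [ENNReal.toReal_add hPTne (by finiteness), ENNReal.toReal_add ENNReal.ofReal_ne_top
      ENNReal.ofReal_ne_top, ENNReal.toReal_ofReal hδ₁.le,
      ENNReal.toReal_ofReal (by linarith)] at htr
    exact htr
  show ENNReal.ofReal (1 - δ₁ - δ₂) ≤ P T
  calc ENNReal.ofReal (1 - δ₁ - δ₂) ≤ ENNReal.ofReal ((P T).toReal) :=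
        ENNReal.ofReal_le_ofReal (by linarith)
    _ = P T := ENNReal.ofReal_toReal hPTne
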